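/- Let N ≥ 1, r, s, c ∈ (0,1), α_s, α_r, α_c > 0, and set m = max{r, s, c}. Then there exists a constant C > 0 (depending only on N, r, s, c, α_s, α_r, α_c) such that for every λ > 0 and every φ ∈ L²(ℝ^N) with finite Gagliardo seminorm [φ]_{m,ℝ^N}, one has E_λ(φ) ≤ C ( λ^{2r−2m} [φ]_{m, B_{2/λ}(0)}² + [φ]_{r, {|x| > 1/λ}}² + (λ^{−N} + λ^{2r−2c−N}) ∫_{ℝ^N} (φ(y) − φ(0))² / |y|^{N+2c} dy ). -/

import Mathlib

open MeasureTheory ENNReal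

/-- The squared Gagliardo seminorm `[φ]_{s,Ω}²` on a set `Ω ⊆ ℝ^N`. -/
noncomputable def gagliardoSq {N : ℕ} (s : ℝ) (Ω : Set (EuclideanSpace ℝ (Fin N)))
    (φ : EuclideanSpace ℝ (Fin N) → ℝ) : ℝ≥0∞ :=
  ∫⁻ x in Ω, ∫⁻ y in Ω, ENNReal.ofReal ((φ x - φ y) ^ 2 / ‖x - y‖ ^ ((N : ℝ) + 2 * s))

/-- The rescaled energy `E_λ` of the coupled nonlocal problem (ball of radius `1/λ` and its
complement). -/
noncomputable def rescaledEnergy (N : ℕ) (r s c αs αr αc lam : ℝ)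
    (φ : EuclideanSpace ℝ (Fin N) → ℝ) : ℝ≥0∞ :=
  ENNReal.ofReal (αs / 4 * lam ^ (2 * r - 2 * s)) *
      (∫⁻ x in {x : EuclideanSpace ℝ (Fin N) | ‖x‖ < 1 / lam},
        ∫⁻ y in {y : EuclideanSpace ℝ (Fin N) | ‖y‖ < 1 / lam},
          ENNReal.ofReal ((φ y - φ x) ^ 2 / ‖x - y‖ ^ ((N : ℝ) + 2 * s))) +
    ENNReal.ofReal (αr / 4) *
      (∫⁻ x in {x : EuclideanSpace ℝ (Fin N) | 1 / lam < ‖x‖},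
        ∫⁻ y in {y : EuclideanSpace ℝ (Fin N) | 1 / lam < ‖y‖},
          ENNReal.ofReal ((φ y - φ x) ^ 2 / ‖x - y‖ ^ ((N : ℝ) + 2 * r))) +
    ENNReal.ofReal (αc / 2 * lam ^ (2 * r - 2 * c)) *
      (∫⁻ x in {x : EuclideanSpace ℝ (Fin N) | ‖x‖ < 1 / lam},
        ∫⁻ y in {y : EuclideanSpace ℝ (Fin N) | 1 / lam < ‖y‖},
          ENNReal.ofReal ((φ y - φ x) ^ 2 / ‖x - y‖ ^ ((N : ℝ) + 2 * c)))

section Helpers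

lemma aux_sq (a b e : ℝ) : (a - b)^2 ≤ 2*(a-e)^2 + 2*(e-b)^2 := by nlinarith [sq_nonneg (a - 2*e + b)]

lemma aux_div1 {A d R2 p q : ℝ} (hA : 0 ≤ A) (hd : 0 ≤ d) (hdR : d ≤ R2) (hp : 0 < p)
    (hpq : p ≤ q) (hR : 0 < R2) : A / d ^ p ≤ R2 ^ (q - p) * (A / d ^ q) := by
  rcases eq_or_lt_of_le hd with h0 | hd'
  · rw [← h0]
    simp [Real.zero_rpow hp.ne', Real.zero_rpow (hp.trans_le hpq).ne']
  · rw [mul_div_assoc', div_le_div_iff₀ (Real.rpow_pos_of_pos hd' _) (Real.rpow_pos_of_pos hd' _)]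
    have h1 : d ^ q = d ^ p * d ^ (q - p) := by
      rw [← Real.rpow_add hd']; ring_nf
    have h2 : d ^ (q - p) ≤ R2 ^ (q - p) :=
      Real.rpow_le_rpow hd'.le hdR (sub_nonneg.2 hpq)
    rw [h1]
    have := mul_le_mul_of_nonneg_left h2 (mul_nonneg hA (Real.rpow_pos_of_pos hd' p).le)
    nlinarith [Real.rpow_pos_of_pos hd' p]

lemma aux_div2 {A b d p : ℝ} (hA : 0 ≤ A) (hb : 0 < b) (hd : b/2 ≤ d) (hp : 0 < p) :
    A / d ^ p ≤ 2 ^ p * (A / b ^ p) := by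
  have hd0 : (0:ℝ) < b/2 := by linarith
  have h1 : (b/2) ^ p ≤ d ^ p := Real.rpow_le_rpow hd0.le hd hp.le
  have h2 : (b/2:ℝ) ^ p = b ^ p / 2 ^ p := Real.div_rpow hb.le (by norm_num : (0:ℝ) ≤ 2) p
  have hbp : (0:ℝ) < b ^ p := Real.rpow_pos_of_pos hb _
  have h2p : (0:ℝ) < (2:ℝ) ^ p := Real.rpow_pos_of_pos (by norm_num) _
  calc A / d ^ p ≤ A / (b ^ p / 2 ^ p) := by
        apply div_le_div_of_nonneg_left hA (by rw [← h2]; exact Real.rpow_pos_of_pos hd0 _) ?_ |>.trans_eq rfl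
        · rw [← h2]; exact h1
    _ = 2 ^ p * (A / b ^ p) := by field_simp

lemma exists_dyadic {t : ℝ} (ht : 1 ≤ t) : ∃ k : ℕ, (2:ℝ)^k ≤ t ∧ t < 2^(k+1) := by
  have h0 : (0:ℝ) ≤ t := by linarith
  have hn : 1 ≤ ⌊t⌋₊ := Nat.le_floor (by exact_mod_cast ht)
  refine ⟨Nat.log 2 ⌊t⌋₊, ?_, ?_⟩
  · calc ((2:ℝ))^(Nat.log 2 ⌊t⌋₊) = ((2^(Nat.log 2 ⌊t⌋₊) : ℕ) : ℝ) := by push_cast; ring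
      _ ≤ (⌊t⌋₊ : ℝ) := by exact_mod_cast Nat.pow_log_le_self 2 (by omega)
      _ ≤ t := Nat.floor_le h0
  · have h1 : ⌊t⌋₊ < 2 ^ (Nat.log 2 ⌊t⌋₊ + 1) := Nat.lt_pow_succ_log_self (by norm_num) _
    have h2 : t < (⌊t⌋₊ : ℝ) + 1 := Nat.lt_floor_add_one t
    calc t < (⌊t⌋₊ : ℝ) + 1 := h2
      _ ≤ 2 ^ (Nat.log 2 ⌊t⌋₊ + 1) := by exact_mod_cast Nat.succ_le_of_lt h1

lemma J_bound (N : ℕ) (hN : 1 ≤ N) (c : ℝ) (hc : 0 < c) {R₀ : ℝ} (hR₀ : 0 < R₀) :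
    ∫⁻ y in {y : EuclideanSpace ℝ (Fin N) | R₀ ≤ ‖y‖},
      ENNReal.ofReal (1 / ‖y‖ ^ ((N:ℝ) + 2*c)) ≤
    ENNReal.ofReal ((2:ℝ)^(N:ℝ) / (1 - 2^(-(2*c))) * R₀ ^ (-(2*c))) *
      volume (Metric.ball (0:EuclideanSpace ℝ (Fin N)) 1) := by
  haveI : Nonempty (Fin N) := ⟨⟨0, hN⟩⟩
  haveI : Nontrivial (EuclideanSpace ℝ (Fin N)) := by
    refine nontrivial_of_ne (EuclideanSpace.single ⟨0, hN⟩ (1:ℝ)) 0 ?_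
    intro h
    have := congrArg norm h
    rw [EuclideanSpace.norm_single, norm_zero] at this
    norm_num at this
  set p : ℝ := (N:ℝ) + 2*c with hp
  have hppos : 0 < p := by positivity
  set q : ℝ := (2:ℝ)^(-(2*c)) with hq
  have hq0 : 0 < q := Real.rpow_pos_of_pos two_pos _
  have hq1 : q < 1 := Real.rpow_lt_one_of_one_lt_of_neg one_lt_two (by linarith)
  set v : ℝ≥0∞ := volume (Metric.ball (0:EuclideanSpace ℝ (Fin N)) 1) with hv
  set S : ℕ → Set (EuclideanSpace ℝ (Fin N)) := fun k => {y | (2:ℝ)^k * R₀ ≤ ‖y‖} ∩ Metric.ball 0 ((2:ℝ)^(k+1) * R₀)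
    with hS
  have h_cover : {y : EuclideanSpace ℝ (Fin N) | R₀ ≤ ‖y‖} ⊆ ⋃ k, S k := by
    intro y hy
    have hyn : R₀ ≤ ‖y‖ := hy
    have ht : 1 ≤ ‖y‖ / R₀ := (one_le_div hR₀).2 hyn
    obtain ⟨k, h1, h2⟩ := exists_dyadic ht
    refine Set.mem_iUnion.2 ⟨k, ⟨?_, ?_⟩⟩
    · exact (le_div_iff₀ hR₀).1 h1
    · rw [Metric.mem_ball, dist_zero_right]
      exact (div_lt_iff₀ hR₀).1 h2
  have hshell : ∀ k, ∫⁻ y in S k, ENNReal.ofReal (1/‖y‖^p) ≤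
      ENNReal.ofReal ((2:ℝ)^(N:ℝ) * R₀^(-(2*c)) * q^k) * v := by
    intro k
    have hrk : (0:ℝ) < 2^k * R₀ := by positivity
    have h1 : ∫⁻ y in S k, ENNReal.ofReal (1/‖y‖^p) ≤
        ∫⁻ _ in S k, ENNReal.ofReal (1/((2:ℝ)^k * R₀)^p) := by
      refine setLIntegral_mono' ?_ ?_
      · exact ((isClosed_le continuous_const continuous_norm).measurableSet).inter
          measurableSet_ball
      · intro y hy
        apply ENNReal.ofReal_le_ofReal
        have hle : ((2:ℝ)^k * R₀)^p ≤ ‖y‖^p := Real.rpow_le_rpow hrk.le hy.1 hppos.le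
        exact one_div_le_one_div_of_le (Real.rpow_pos_of_pos hrk p) hle
    rw [setLIntegral_const] at h1
    have h2 : volume (S k) ≤ ENNReal.ofReal (((2:ℝ)^(k+1) * R₀)^N) * v := by
      calc volume (S k) ≤ volume (Metric.ball (0:EuclideanSpace ℝ (Fin N)) ((2:ℝ)^(k+1) * R₀)) :=
            measure_mono Set.inter_subset_right
        _ = ENNReal.ofReal (((2:ℝ)^(k+1) * R₀)^N) * v := by
            rw [Measure.addHaar_ball _ _ (by positivity), finrank_euclideanSpace_fin]
    have key : 1/((2:ℝ)^k * R₀)^p * (((2:ℝ)^(k+1) * R₀)^N) =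
        (2:ℝ)^(N:ℝ) * R₀^(-(2*c)) * q^k := by
      have h2' : (0:ℝ) < 2 := two_pos
      rw [one_div, ← Real.rpow_natCast (((2:ℝ)^(k+1) * R₀)) N,
        ← Real.rpow_natCast (2:ℝ) (k+1), ← Real.rpow_natCast (2:ℝ) k,
        ← Real.rpow_natCast q k,
        Real.mul_rpow (by positivity) hR₀.le, Real.mul_rpow (by positivity) hR₀.le,
        ← Real.rpow_mul h2'.le, ← Real.rpow_mul h2'.le,
        hq, ← Real.rpow_mul h2'.le,
        mul_inv, ← Real.rpow_neg (by positivity), ← Real.rpow_neg hR₀.le]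
      push_cast
      rw [show ((2:ℝ)^(-((k:ℝ)*p)) * R₀^(-p)) * ((2:ℝ)^(((k:ℝ)+1)*(N:ℝ)) * R₀^(N:ℝ))
          = ((2:ℝ)^(-((k:ℝ)*p)) * (2:ℝ)^(((k:ℝ)+1)*(N:ℝ))) * (R₀^(-p) * R₀^(N:ℝ)) by ring,
        ← Real.rpow_add h2', ← Real.rpow_add hR₀]
      rw [show (2:ℝ)^(N:ℝ) * R₀ ^ (-(2*c)) * (2:ℝ)^(-(2*c)*(k:ℝ))
          = ((2:ℝ)^(N:ℝ) * (2:ℝ)^(-(2*c)*(k:ℝ))) * R₀ ^ (-(2*c)) by ring,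
        ← Real.rpow_add h2']
      congr 1
      · congr 1; rw [hp]; push_cast; ring
      · congr 1; rw [hp]; ring
    calc ∫⁻ y in S k, ENNReal.ofReal (1/‖y‖^p) ≤
          ENNReal.ofReal (1/((2:ℝ)^k * R₀)^p) * volume (S k) := h1
      _ ≤ ENNReal.ofReal (1/((2:ℝ)^k * R₀)^p) *
            (ENNReal.ofReal (((2:ℝ)^(k+1) * R₀)^N) * v) := mul_le_mul_right h2 _
      _ = ENNReal.ofReal ((2:ℝ)^(N:ℝ) * R₀^(-(2*c)) * q^k) * v := by
          rw [← mul_assoc, ← ENNReal.ofReal_mul (by positivity), key]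
  calc ∫⁻ y in {y : EuclideanSpace ℝ (Fin N) | R₀ ≤ ‖y‖}, ENNReal.ofReal (1/‖y‖^p)
      ≤ ∫⁻ y in ⋃ k, S k, ENNReal.ofReal (1/‖y‖^p) := lintegral_mono_set h_cover
    _ ≤ ∑' k, ∫⁻ y in S k, ENNReal.ofReal (1/‖y‖^p) := lintegral_iUnion_le _ _
    _ ≤ ∑' k, ENNReal.ofReal ((2:ℝ)^(N:ℝ) * R₀^(-(2*c)) * q^k) * v :=
        ENNReal.tsum_le_tsum hshell
    _ = ∑' k : ℕ, (ENNReal.ofReal ((2:ℝ)^(N:ℝ) * R₀^(-(2*c))) * v) * (ENNReal.ofReal q)^k := by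
        refine tsum_congr fun k => ?_
        rw [ENNReal.ofReal_mul (by positivity), ENNReal.ofReal_pow hq0.le]
        ring
    _ = (ENNReal.ofReal ((2:ℝ)^(N:ℝ) * R₀^(-(2*c))) * v) * (1 - ENNReal.ofReal q)⁻¹ := by
        rw [ENNReal.tsum_mul_left, ENNReal.tsum_geometric]
    _ = ENNReal.ofReal ((2:ℝ)^(N:ℝ) / (1 - 2^(-(2*c))) * R₀ ^ (-(2*c))) * v := by
        rw [show (1:ℝ≥0∞) - ENNReal.ofReal q = ENNReal.ofReal (1 - q) by
            rw [ENNReal.ofReal_sub _ hq0.le, ENNReal.ofReal_one],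
          ← ENNReal.ofReal_inv_of_pos (by linarith)]
        rw [mul_right_comm, ← ENNReal.ofReal_mul (by positivity)]
        congr 1
        rw [hq, div_eq_mul_inv]
        ring

lemma dbl_congr {N : ℕ} {φ ψ : EuclideanSpace ℝ (Fin N) → ℝ} (hae : φ =ᵐ[volume] ψ)
    (G : ℝ → ℝ → EuclideanSpace ℝ (Fin N) → EuclideanSpace ℝ (Fin N) → ℝ≥0∞)
    (S T : Set (EuclideanSpace ℝ (Fin N))) :
    ∫⁻ x in S, ∫⁻ y in T, G (φ x) (φ y) x y = ∫⁻ x in S, ∫⁻ y in T, G (ψ x) (ψ y) x y := by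
  refine lintegral_congr_ae (ae_restrict_of_ae ?_)
  filter_upwards [hae] with x hx
  refine lintegral_congr_ae (ae_restrict_of_ae ?_)
  filter_upwards [hae] with y hy
  rw [hx, hy]

lemma pull_const1 {α : Type*} [MeasurableSpace α] (μ : Measure α) {K : ℝ} (hK : 0 ≤ K)
    (g : α → ℝ) :
    ∫⁻ x, ENNReal.ofReal (K * g x) ∂μ = ENNReal.ofReal K * ∫⁻ x, ENNReal.ofReal (g x) ∂μ := by
  rw [← lintegral_const_mul' _ _ ofReal_ne_top]
  exact lintegral_congr fun x => ENNReal.ofReal_mul hK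

lemma pull_const2 {α : Type*} [MeasurableSpace α] (μ ν : Measure α) {K : ℝ} (hK : 0 ≤ K)
    (g : α → α → ℝ) :
    ∫⁻ x, ∫⁻ y, ENNReal.ofReal (K * g x y) ∂ν ∂μ =
      ENNReal.ofReal K * ∫⁻ x, ∫⁻ y, ENNReal.ofReal (g x y) ∂ν ∂μ := by
  rw [← lintegral_const_mul' _ _ ofReal_ne_top]
  exact lintegral_congr fun x => pull_const1 ν hK _

lemma step_ball {N : ℕ} (ψ : EuclideanSpace ℝ (Fin N) → ℝ) {p q R2 : ℝ} (hp : 0 < p)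
    (hpq : p ≤ q) (hR2 : 0 < R2) {S T S' T' : Set (EuclideanSpace ℝ (Fin N))}
    (hS : MeasurableSet S) (hT : MeasurableSet T)
    (hST : ∀ x ∈ S, ∀ y ∈ T, ‖x - y‖ ≤ R2) (hSS' : S ⊆ S') (hTT' : T ⊆ T') :
    ∫⁻ x in S, ∫⁻ y in T, ENNReal.ofReal ((ψ y - ψ x)^2 / ‖x-y‖^p) ≤
      ENNReal.ofReal (R2^(q-p)) *
        ∫⁻ x in S', ∫⁻ y in T', ENNReal.ofReal ((ψ x - ψ y)^2 / ‖x-y‖^q) := by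
  calc ∫⁻ x in S, ∫⁻ y in T, ENNReal.ofReal ((ψ y - ψ x)^2 / ‖x-y‖^p)
      ≤ ∫⁻ x in S, ∫⁻ y in T, ENNReal.ofReal (R2^(q-p) * ((ψ x - ψ y)^2 / ‖x-y‖^q)) := by
        refine setLIntegral_mono' hS fun x hx => setLIntegral_mono' hT fun y hy => ?_
        apply ENNReal.ofReal_le_ofReal
        rw [show (ψ y - ψ x)^2 = (ψ x - ψ y)^2 by ring]
        exact aux_div1 (sq_nonneg _) (norm_nonneg _) (hST x hx y hy) hp hpq hR2
    _ = ENNReal.ofReal (R2^(q-p)) *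
          ∫⁻ x in S, ∫⁻ y in T, ENNReal.ofReal ((ψ x - ψ y)^2 / ‖x-y‖^q) :=
        pull_const2 _ _ (Real.rpow_pos_of_pos hR2 _).le _
    _ ≤ ENNReal.ofReal (R2^(q-p)) *
          ∫⁻ x in S', ∫⁻ y in T', ENNReal.ofReal ((ψ x - ψ y)^2 / ‖x-y‖^q) := by
        refine mul_le_mul_right ?_ _
        refine le_trans (lintegral_mono fun x => lintegral_mono_set hTT') ?_
        exact lintegral_mono_set hSS'

end Helpers

set_option maxHeartbeats 2000000
/-- Upper bound for the rescaled energy `E_λ` in terms of Gagliardo seminorms of maximal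
order `m = max{r,s,c}` and a weighted integral centered at the origin. -/
theorem rescaled_energy_upper_bound (N : ℕ) (hN : 1 ≤ N) (r s c : ℝ)
    (hr : r ∈ Set.Ioo (0 : ℝ) 1) (hs : s ∈ Set.Ioo (0 : ℝ) 1) (hc : c ∈ Set.Ioo (0 : ℝ) 1)
    (αs αr αc : ℝ) (hαs : 0 < αs) (hαr : 0 < αr) (hαc : 0 < αc) :
    ∃ C : ℝ, 0 < C ∧ ∀ lam : ℝ, 0 < lam →
      ∀ φ : EuclideanSpace ℝ (Fin N) → ℝ, MemLp φ 2 volume →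
      gagliardoSq (max r (max s c)) Set.univ φ ≠ ⊤ →
      rescaledEnergy N r s c αs αr αc lam φ ≤
        ENNReal.ofReal C *
          (ENNReal.ofReal (lam ^ (2 * r - 2 * max r (max s c))) *
              gagliardoSq (max r (max s c)) (Metric.ball 0 (2 / lam)) φ +
            gagliardoSq r {x : EuclideanSpace ℝ (Fin N) | 1 / lam < ‖x‖} φ +
            ENNReal.ofReal (lam ^ (-(N : ℝ)) + lam ^ (2 * r - 2 * c - (N : ℝ))) *
              ∫⁻ y, ENNReal.ofReal ((φ y - φ 0) ^ 2 / ‖y‖ ^ ((N : ℝ) + 2 * c))) := by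
  obtain ⟨hr0, hr1⟩ := hr
  obtain ⟨hs0, hs1⟩ := hs
  obtain ⟨hc0, hc1⟩ := hc
  set m := max r (max s c) with hm
  have hsm : s ≤ m := le_trans (le_max_left s c) (le_max_right r _)
  have hcm : c ≤ m := le_trans (le_max_right s c) (le_max_right r _)
  have hrm : r ≤ m := le_max_left _ _
  have hm0 : 0 < m := lt_of_lt_of_le hr0 hrm
  have hden : 0 < 1 - (2:ℝ)^(-(2*c)) :=
    sub_pos.2 (Real.rpow_lt_one_of_one_lt_of_neg one_lt_two (by linarith))
  set Vb := (volume (Metric.ball (0:EuclideanSpace ℝ (Fin N)) 1)).toReal with hVbdef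
  have hVb0 : 0 ≤ Vb := ENNReal.toReal_nonneg
  have hvol : volume (Metric.ball (0:EuclideanSpace ℝ (Fin N)) 1) = ENNReal.ofReal Vb :=
    (ENNReal.ofReal_toReal (measure_ball_lt_top).ne).symm
  set KJ : ℝ := (2:ℝ)^(N:ℝ) / (1 - 2^(-(2*c))) with hKJdef
  have hKJ0 : 0 ≤ KJ := div_nonneg (by positivity) hden.le
  set K1 : ℝ := αs/4 * (2:ℝ)^(2*m-2*s) with hK1def
  set K2 : ℝ := αr/4 with hK2def
  set K3 : ℝ := αc/2 * (3:ℝ)^(2*m-2*c) with hK3def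
  set K4 : ℝ := αc/2 * ((2:ℝ)^((N:ℝ)+2*c+1) * Vb
      + (2:ℝ)^((N:ℝ)+2*c+1) * (KJ * (2:ℝ)^(-(2*c)) * Vb)) with hK4def
  have hK10 : 0 ≤ K1 := mul_nonneg (by linarith) (Real.rpow_pos_of_pos two_pos _).le
  have hK20 : 0 ≤ K2 := by rw [hK2def]; linarith
  have hK30 : 0 ≤ K3 := mul_nonneg (by linarith) (Real.rpow_pos_of_pos (by norm_num) _).le
  have hK40 : 0 ≤ K4 := by
    have h1 : (0:ℝ) ≤ (2:ℝ)^((N:ℝ)+2*c+1) := (Real.rpow_pos_of_pos two_pos _).le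
    have h2 : (0:ℝ) ≤ (2:ℝ)^(-(2*c)) := (Real.rpow_pos_of_pos two_pos _).le
    have := mul_nonneg (mul_nonneg hKJ0 h2) hVb0
    rw [hK4def]
    nlinarith [mul_nonneg h1 hVb0, mul_nonneg h1 this]
  refine ⟨K1 + K3 + K2 + K4 + 1, by linarith, ?_⟩
  intro lam hlam φ hφ _hG
  haveI : Nonempty (Fin N) := ⟨⟨0, hN⟩⟩
  haveI nontriv : Nontrivial (EuclideanSpace ℝ (Fin N)) := by
    refine nontrivial_of_ne (EuclideanSpace.single ⟨0, hN⟩ (1:ℝ)) 0 ?_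
    intro h
    have := congrArg norm h
    rw [EuclideanSpace.norm_single, norm_zero] at this
    norm_num at this
  -- measurable representative agreeing with φ a.e. and at 0
  obtain ⟨ψ, hψm, hψ0, hae⟩ : ∃ ψ : EuclideanSpace ℝ (Fin N) → ℝ,
      Measurable ψ ∧ ψ 0 = φ 0 ∧ φ =ᵐ[volume] ψ := by
    have hφae : AEMeasurable φ volume := hφ.aestronglyMeasurable.aemeasurable
    classical
    refine ⟨fun x => if x = 0 then φ 0 else hφae.mk φ x,
      Measurable.ite (measurableSet_eq) measurable_const hφae.measurable_mk, if_pos rfl, ?_⟩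
    have hsing : volume ({(0 : EuclideanSpace ℝ (Fin N))} :
        Set (EuclideanSpace ℝ (Fin N))) = 0 := measure_singleton 0
    have h1 : φ =ᵐ[volume] hφae.mk φ := hφae.ae_eq_mk
    have h2 : ∀ᵐ x ∂(volume : Measure (EuclideanSpace ℝ (Fin N))), x ≠ 0 := by
      rw [ae_iff]
      simpa using hsing
    filter_upwards [h1, h2] with x h1x h2x
    simp only [if_neg h2x]
    exact h1x
  -- abbreviations
  set X := {x : EuclideanSpace ℝ (Fin N) | ‖x‖ < 1/lam} with hXdef
  set Y := {x : EuclideanSpace ℝ (Fin N) | 1/lam < ‖x‖} with hYdef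
  set B2 := Metric.ball (0:EuclideanSpace ℝ (Fin N)) (2/lam) with hB2def
  have hmX : MeasurableSet X := (isOpen_lt continuous_norm continuous_const).measurableSet
  have hmY : MeasurableSet Y := (isOpen_lt continuous_const continuous_norm).measurableSet
  have hl1 : 0 < 1/lam := by positivity
  have hl2 : (1:ℝ)/lam < 2/lam := by
    have h := one_div_pos.2 hlam
    have : (2:ℝ)/lam = 1/lam + 1/lam := by ring
    linarith
  have hXB2 : X ⊆ B2 := by
    intro x hx
    have hx' : ‖x‖ < 1/lam := hx
    rw [hB2def, Metric.mem_ball, dist_zero_right]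
    linarith
  have hpc : (0:ℝ) < (N:ℝ) + 2*c := by positivity
  have hps : (0:ℝ) < (N:ℝ) + 2*s := by positivity
  have hpr : (0:ℝ) < (N:ℝ) + 2*r := by positivity
  set Iψ := ∫⁻ y, ENNReal.ofReal ((ψ y - ψ 0) ^ 2 / ‖y‖ ^ ((N : ℝ) + 2 * c)) with hIdef
  set Gm := ∫⁻ x in B2, ∫⁻ y in B2,
      ENNReal.ofReal ((ψ x - ψ y) ^ 2 / ‖x - y‖ ^ ((N : ℝ) + 2 * m)) with hGmdef
  set Gr := ∫⁻ x in Y, ∫⁻ y in Y,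
      ENNReal.ofReal ((ψ x - ψ y) ^ 2 / ‖x - y‖ ^ ((N : ℝ) + 2 * r)) with hGrdef
  -- reduce to the statement about ψ
  have e1 : (∫⁻ x in X, ∫⁻ y in X,
        ENNReal.ofReal ((φ y - φ x) ^ 2 / ‖x - y‖ ^ ((N:ℝ) + 2*s)))
      = ∫⁻ x in X, ∫⁻ y in X,
        ENNReal.ofReal ((ψ y - ψ x) ^ 2 / ‖x - y‖ ^ ((N:ℝ) + 2*s)) :=
    dbl_congr hae (fun a b x y => ENNReal.ofReal ((b - a) ^ 2 / ‖x - y‖ ^ ((N:ℝ) + 2*s))) X X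
  have e2 : (∫⁻ x in Y, ∫⁻ y in Y,
        ENNReal.ofReal ((φ y - φ x) ^ 2 / ‖x - y‖ ^ ((N:ℝ) + 2*r)))
      = ∫⁻ x in Y, ∫⁻ y in Y,
        ENNReal.ofReal ((ψ y - ψ x) ^ 2 / ‖x - y‖ ^ ((N:ℝ) + 2*r)) :=
    dbl_congr hae (fun a b x y => ENNReal.ofReal ((b - a) ^ 2 / ‖x - y‖ ^ ((N:ℝ) + 2*r))) Y Y
  have e3 : (∫⁻ x in X, ∫⁻ y in Y,
        ENNReal.ofReal ((φ y - φ x) ^ 2 / ‖x - y‖ ^ ((N:ℝ) + 2*c)))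
      = ∫⁻ x in X, ∫⁻ y in Y,
        ENNReal.ofReal ((ψ y - ψ x) ^ 2 / ‖x - y‖ ^ ((N:ℝ) + 2*c)) :=
    dbl_congr hae (fun a b x y => ENNReal.ofReal ((b - a) ^ 2 / ‖x - y‖ ^ ((N:ℝ) + 2*c))) X Y
  have e4 : gagliardoSq m B2 φ = Gm := by
    rw [gagliardoSq, hGmdef]
    exact dbl_congr hae
      (fun a b x y => ENNReal.ofReal ((a - b) ^ 2 / ‖x - y‖ ^ ((N:ℝ) + 2*m))) B2 B2
  have e5 : gagliardoSq r Y φ = Gr := by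
    rw [gagliardoSq, hGrdef]
    exact dbl_congr hae
      (fun a b x y => ENNReal.ofReal ((a - b) ^ 2 / ‖x - y‖ ^ ((N:ℝ) + 2*r))) Y Y
  have eI : (∫⁻ y, ENNReal.ofReal ((φ y - φ 0) ^ 2 / ‖y‖ ^ ((N : ℝ) + 2 * c))) = Iψ := by
    rw [hIdef]
    refine lintegral_congr_ae ?_
    filter_upwards [hae] with y hy
    rw [hy, ← hψ0]
  rw [rescaledEnergy]
  rw [e1, e2, e3, e4, e5, eI]
  -- T1 estimate
  have H1 : (∫⁻ x in X, ∫⁻ y in X,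
        ENNReal.ofReal ((ψ y - ψ x) ^ 2 / ‖x - y‖ ^ ((N:ℝ) + 2*s)))
      ≤ ENNReal.ofReal ((2/lam)^(2*m-2*s)) * Gm := by
    have hb : ∀ x ∈ X, ∀ y ∈ X, ‖x - y‖ ≤ 2/lam := by
      intro x hx y hy
      have hx' : ‖x‖ < 1/lam := hx
      have hy' : ‖y‖ < 1/lam := hy
      calc ‖x - y‖ ≤ ‖x‖ + ‖y‖ := norm_sub_le x y
        _ ≤ 2/lam := by rw [show (2:ℝ)/lam = 1/lam + 1/lam by ring]; linarith
    have h := step_ball ψ hps (by linarith : (N:ℝ)+2*s ≤ (N:ℝ)+2*m)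
      (by positivity : (0:ℝ) < 2/lam) hmX hmX hb hXB2 hXB2
    rw [show ((N:ℝ)+2*m) - ((N:ℝ)+2*s) = 2*m-2*s by ring] at h
    exact h
  -- T2 estimate
  have H2 : (∫⁻ x in Y, ∫⁻ y in Y,
        ENNReal.ofReal ((ψ y - ψ x) ^ 2 / ‖x - y‖ ^ ((N:ℝ) + 2*r))) = Gr := by
    rw [hGrdef]
    exact lintegral_congr fun x => lintegral_congr fun y => by
      rw [show (ψ y - ψ x)^2 = (ψ x - ψ y)^2 by ring]
  -- T3 : split inner integral
  have hmYB : MeasurableSet (Y ∩ B2) := hmY.inter measurableSet_ball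
  have hmYd : MeasurableSet (Y \ B2) := hmY.diff measurableSet_ball
  have hker : Measurable (fun z : (EuclideanSpace ℝ (Fin N)) × (EuclideanSpace ℝ (Fin N)) =>
      ENNReal.ofReal ((ψ z.2 - ψ z.1)^2 / ‖z.1 - z.2‖ ^ ((N:ℝ)+2*c))) := by
    apply Measurable.ennreal_ofReal
    apply Measurable.div
    · exact ((hψm.comp measurable_snd).sub (hψm.comp measurable_fst)).pow_const 2
    · exact (Real.continuous_rpow_const hpc.le).measurable.comp
        ((measurable_fst.sub measurable_snd).norm)
  have hu_meas : Measurable (fun x => ∫⁻ y in Y ∩ B2,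
      ENNReal.ofReal ((ψ y - ψ x)^2 / ‖x - y‖ ^ ((N:ℝ)+2*c))) :=
    Measurable.lintegral_prod_right' hker
  have Hsplit : (∫⁻ x in X, ∫⁻ y in Y,
        ENNReal.ofReal ((ψ y - ψ x) ^ 2 / ‖x - y‖ ^ ((N:ℝ) + 2*c)))
      ≤ (∫⁻ x in X, ∫⁻ y in Y ∩ B2,
          ENNReal.ofReal ((ψ y - ψ x) ^ 2 / ‖x - y‖ ^ ((N:ℝ) + 2*c)))
        + ∫⁻ x in X, ∫⁻ y in Y \ B2,
            ENNReal.ofReal ((ψ y - ψ x) ^ 2 / ‖x - y‖ ^ ((N:ℝ) + 2*c)) := by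
    have hsplitY : ∀ F : (EuclideanSpace ℝ (Fin N)) → ℝ≥0∞,
        (∫⁻ y in Y, F y) ≤ (∫⁻ y in Y ∩ B2, F y) + ∫⁻ y in Y \ B2, F y := by
      intro F
      conv_lhs => rw [show Y = (Y ∩ B2) ∪ (Y \ B2) from (Set.inter_union_diff Y B2).symm]
      exact lintegral_union_le _ _ _
    calc (∫⁻ x in X, ∫⁻ y in Y,
          ENNReal.ofReal ((ψ y - ψ x) ^ 2 / ‖x - y‖ ^ ((N:ℝ) + 2*c)))
        ≤ ∫⁻ x in X, ((∫⁻ y in Y ∩ B2,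
            ENNReal.ofReal ((ψ y - ψ x) ^ 2 / ‖x - y‖ ^ ((N:ℝ) + 2*c)))
          + ∫⁻ y in Y \ B2,
            ENNReal.ofReal ((ψ y - ψ x) ^ 2 / ‖x - y‖ ^ ((N:ℝ) + 2*c))) :=
          lintegral_mono fun x => hsplitY _
      _ = _ := lintegral_add_left hu_meas _
  -- near part
  have HNear : (∫⁻ x in X, ∫⁻ y in Y ∩ B2,
        ENNReal.ofReal ((ψ y - ψ x) ^ 2 / ‖x - y‖ ^ ((N:ℝ) + 2*c)))
      ≤ ENNReal.ofReal ((3/lam)^(2*m-2*c)) * Gm := by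
    have hb : ∀ x ∈ X, ∀ y ∈ Y ∩ B2, ‖x - y‖ ≤ 3/lam := by
      intro x hx y hy
      have hx' : ‖x‖ < 1/lam := hx
      have hy2 : y ∈ B2 := hy.2
      rw [hB2def, Metric.mem_ball, dist_zero_right] at hy2
      calc ‖x - y‖ ≤ ‖x‖ + ‖y‖ := norm_sub_le x y
        _ ≤ 3/lam := by rw [show (3:ℝ)/lam = 1/lam + 2/lam by ring]; linarith
    have h := step_ball ψ hpc (by linarith : (N:ℝ)+2*c ≤ (N:ℝ)+2*m)
      (by positivity : (0:ℝ) < 3/lam) hmX hmYB hb hXB2 Set.inter_subset_right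
    rw [show ((N:ℝ)+2*m) - ((N:ℝ)+2*c) = 2*m-2*c by ring] at h
    exact h
  -- far part
  have hYdsub : Y \ B2 ⊆ {y : EuclideanSpace ℝ (Fin N) | 2/lam ≤ ‖y‖} := by
    intro y hy
    have h2 : y ∉ B2 := hy.2
    simp only [hB2def, Metric.mem_ball, dist_zero_right, not_lt] at h2
    exact h2
  have hJ : (∫⁻ y in Y \ B2, ENNReal.ofReal (1/‖y‖^((N:ℝ)+2*c)))
      ≤ ENNReal.ofReal (KJ * (2/lam)^(-(2*c))) * ENNReal.ofReal Vb := by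
    calc (∫⁻ y in Y \ B2, ENNReal.ofReal (1/‖y‖^((N:ℝ)+2*c)))
        ≤ ∫⁻ y in {y : EuclideanSpace ℝ (Fin N) | 2/lam ≤ ‖y‖},
            ENNReal.ofReal (1/‖y‖^((N:ℝ)+2*c)) := lintegral_mono_set hYdsub
      _ ≤ ENNReal.ofReal ((2:ℝ)^(N:ℝ) / (1 - 2^(-(2*c))) * (2/lam) ^ (-(2*c))) *
            volume (Metric.ball (0:EuclideanSpace ℝ (Fin N)) 1) :=
          J_bound N hN c hc0 (by positivity)
      _ = ENNReal.ofReal (KJ * (2/lam)^(-(2*c))) * ENNReal.ofReal Vb := by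
          rw [hvol, hKJdef]
  have hmeas_g1 : Measurable (fun y => ENNReal.ofReal ((2:ℝ)^((N:ℝ)+2*c+1) *
      ((ψ y - ψ 0)^2 / ‖y‖^((N:ℝ)+2*c)))) := by
    apply Measurable.ennreal_ofReal
    exact measurable_const.mul (((hψm.sub measurable_const).pow_const 2).div
      ((Real.continuous_rpow_const hpc.le).measurable.comp measurable_norm))
  have hwptw : ∀ x ∈ X, (∫⁻ y in Y \ B2,
        ENNReal.ofReal ((ψ y - ψ x) ^ 2 / ‖x - y‖ ^ ((N:ℝ) + 2*c)))
      ≤ ENNReal.ofReal ((2:ℝ)^((N:ℝ)+2*c+1)) * Iψ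
        + ENNReal.ofReal ((ψ x - ψ 0)^2) * (ENNReal.ofReal ((2:ℝ)^((N:ℝ)+2*c+1)) *
            (ENNReal.ofReal (KJ * (2/lam)^(-(2*c))) * ENNReal.ofReal Vb)) := by
    intro x hx
    have hx' : ‖x‖ < 1/lam := hx
    have hpt : ∀ y ∈ Y \ B2, ENNReal.ofReal ((ψ y - ψ x) ^ 2 / ‖x - y‖ ^ ((N:ℝ) + 2*c))
        ≤ ENNReal.ofReal ((2:ℝ)^((N:ℝ)+2*c+1) * ((ψ y - ψ 0)^2 / ‖y‖^((N:ℝ)+2*c)))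
          + ENNReal.ofReal ((ψ x - ψ 0)^2 * ((2:ℝ)^((N:ℝ)+2*c+1) * (1/‖y‖^((N:ℝ)+2*c)))) := by
      intro y hy
      have hy2 : 2/lam ≤ ‖y‖ := hYdsub hy
      have hy0 : 0 < ‖y‖ := lt_of_lt_of_le (by positivity) hy2
      have hxy : ‖y‖/2 ≤ ‖x - y‖ := by
        have h := norm_sub_norm_le y x
        rw [norm_sub_rev] at h
        have h4 : (2:ℝ)/lam = 1/lam + 1/lam := by ring
        linarith
      have hden' : (0:ℝ) < ‖y‖^((N:ℝ)+2*c) := Real.rpow_pos_of_pos hy0 _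
      have step1 : (ψ y - ψ x)^2 / ‖x - y‖^((N:ℝ)+2*c)
          ≤ 2^((N:ℝ)+2*c) * ((ψ y - ψ x)^2 / ‖y‖^((N:ℝ)+2*c)) :=
        aux_div2 (sq_nonneg _) hy0 hxy hpc
      have step2 : 2^((N:ℝ)+2*c) * ((ψ y - ψ x)^2 / ‖y‖^((N:ℝ)+2*c))
          ≤ 2^((N:ℝ)+2*c) * ((2*(ψ y - ψ 0)^2 + 2*(ψ 0 - ψ x)^2) / ‖y‖^((N:ℝ)+2*c)) := by
        have hnum := aux_sq (ψ y) (ψ x) (ψ 0)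
        have h2p : (0:ℝ) ≤ 2^((N:ℝ)+2*c) := (Real.rpow_pos_of_pos two_pos _).le
        exact mul_le_mul_of_nonneg_left ((div_le_div_iff_of_pos_right hden').2 hnum) h2p
      have step3 : 2^((N:ℝ)+2*c) * ((2*(ψ y - ψ 0)^2 + 2*(ψ 0 - ψ x)^2) / ‖y‖^((N:ℝ)+2*c))
          = (2:ℝ)^((N:ℝ)+2*c+1) * ((ψ y - ψ 0)^2 / ‖y‖^((N:ℝ)+2*c))
            + (ψ x - ψ 0)^2 * ((2:ℝ)^((N:ℝ)+2*c+1) * (1/‖y‖^((N:ℝ)+2*c))) := by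
        rw [Real.rpow_add two_pos ((N:ℝ)+2*c) 1, Real.rpow_one]
        ring
      calc ENNReal.ofReal ((ψ y - ψ x) ^ 2 / ‖x - y‖ ^ ((N:ℝ) + 2*c))
          ≤ ENNReal.ofReal ((2:ℝ)^((N:ℝ)+2*c+1) * ((ψ y - ψ 0)^2 / ‖y‖^((N:ℝ)+2*c))
              + (ψ x - ψ 0)^2 * ((2:ℝ)^((N:ℝ)+2*c+1) * (1/‖y‖^((N:ℝ)+2*c)))) := by
            apply ENNReal.ofReal_le_ofReal
            rw [← step3]
            exact step1.trans step2
        _ = _ := ENNReal.ofReal_add (by positivity) (by positivity)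
    calc (∫⁻ y in Y \ B2, ENNReal.ofReal ((ψ y - ψ x) ^ 2 / ‖x - y‖ ^ ((N:ℝ) + 2*c)))
        ≤ ∫⁻ y in Y \ B2,
            (ENNReal.ofReal ((2:ℝ)^((N:ℝ)+2*c+1) * ((ψ y - ψ 0)^2 / ‖y‖^((N:ℝ)+2*c)))
              + ENNReal.ofReal ((ψ x - ψ 0)^2 * ((2:ℝ)^((N:ℝ)+2*c+1) * (1/‖y‖^((N:ℝ)+2*c))))) :=
          setLIntegral_mono' hmYd hpt
      _ = (∫⁻ y in Y \ B2,
            ENNReal.ofReal ((2:ℝ)^((N:ℝ)+2*c+1) * ((ψ y - ψ 0)^2 / ‖y‖^((N:ℝ)+2*c))))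
          + ∫⁻ y in Y \ B2,
            ENNReal.ofReal ((ψ x - ψ 0)^2 * ((2:ℝ)^((N:ℝ)+2*c+1) * (1/‖y‖^((N:ℝ)+2*c)))) :=
          lintegral_add_left hmeas_g1 _
      _ ≤ ENNReal.ofReal ((2:ℝ)^((N:ℝ)+2*c+1)) * Iψ
          + ENNReal.ofReal ((ψ x - ψ 0)^2) * (ENNReal.ofReal ((2:ℝ)^((N:ℝ)+2*c+1)) *
              (ENNReal.ofReal (KJ * (2/lam)^(-(2*c))) * ENNReal.ofReal Vb)) := by
          refine add_le_add ?_ ?_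
          · calc (∫⁻ y in Y \ B2,
                ENNReal.ofReal ((2:ℝ)^((N:ℝ)+2*c+1) * ((ψ y - ψ 0)^2 / ‖y‖^((N:ℝ)+2*c))))
                ≤ ∫⁻ y, ENNReal.ofReal ((2:ℝ)^((N:ℝ)+2*c+1) *
                    ((ψ y - ψ 0)^2 / ‖y‖^((N:ℝ)+2*c))) := setLIntegral_le_lintegral _ _
              _ = ENNReal.ofReal ((2:ℝ)^((N:ℝ)+2*c+1)) * Iψ := by
                  rw [hIdef]
                  exact pull_const1 _ (by positivity) _
          · rw [pull_const1 _ (sq_nonneg (ψ x - ψ 0)) _]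
            refine mul_le_mul_right ?_ _
            rw [pull_const1 _ (by positivity : (0:ℝ) ≤ (2:ℝ)^((N:ℝ)+2*c+1)) _]
            exact mul_le_mul_right hJ _
  have hvolX : volume X ≤ ENNReal.ofReal ((1/lam)^(N:ℝ)) * ENNReal.ofReal Vb := by
    have hXball : X = Metric.ball (0:EuclideanSpace ℝ (Fin N)) (1/lam) := by
      rw [hXdef]
      ext x
      simp [Metric.mem_ball, dist_zero_right]
    rw [hXball, Measure.addHaar_ball _ _ hl1.le, finrank_euclideanSpace_fin, hvol,
      ← Real.rpow_natCast (1/lam) N]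
  have hL2X : (∫⁻ x in X, ENNReal.ofReal ((ψ x - ψ 0)^2))
      ≤ ENNReal.ofReal ((1/lam)^((N:ℝ)+2*c)) * Iψ := by
    calc (∫⁻ x in X, ENNReal.ofReal ((ψ x - ψ 0)^2))
        ≤ ∫⁻ x in X, ENNReal.ofReal ((1/lam)^((N:ℝ)+2*c) *
            ((ψ x - ψ 0)^2 / ‖x‖^((N:ℝ)+2*c))) := by
          refine setLIntegral_mono' hmX fun x hx => ?_
          rcases eq_or_ne x 0 with h | h
          · simp only [h, sub_self]
            simpa using zero_le _
          · have hx0 : 0 < ‖x‖ := norm_pos_iff.2 h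
            apply ENNReal.ofReal_le_ofReal
            have hx' : ‖x‖ < 1/lam := hx
            have h1 : ‖x‖^((N:ℝ)+2*c) ≤ (1/lam)^((N:ℝ)+2*c) :=
              Real.rpow_le_rpow (norm_nonneg _) hx'.le hpc.le
            have h2 : ‖x‖^((N:ℝ)+2*c) ≠ 0 := (Real.rpow_pos_of_pos hx0 _).ne'
            calc (ψ x - ψ 0)^2
                = ((ψ x - ψ 0)^2/‖x‖^((N:ℝ)+2*c)) * ‖x‖^((N:ℝ)+2*c) :=
                  (div_mul_cancel₀ _ h2).symm
              _ ≤ ((ψ x - ψ 0)^2/‖x‖^((N:ℝ)+2*c)) * (1/lam)^((N:ℝ)+2*c) :=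
                  mul_le_mul_of_nonneg_left h1 (by positivity)
              _ = (1/lam)^((N:ℝ)+2*c) * ((ψ x - ψ 0)^2/‖x‖^((N:ℝ)+2*c)) := mul_comm _ _
      _ = ENNReal.ofReal ((1/lam)^((N:ℝ)+2*c)) *
            ∫⁻ x in X, ENNReal.ofReal ((ψ x - ψ 0)^2 / ‖x‖^((N:ℝ)+2*c)) :=
          pull_const1 _ (by positivity) _
      _ ≤ ENNReal.ofReal ((1/lam)^((N:ℝ)+2*c)) * Iψ := by
          rw [hIdef]
          exact mul_le_mul_right (setLIntegral_le_lintegral _ _) _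
  have HFar : (∫⁻ x in X, ∫⁻ y in Y \ B2,
        ENNReal.ofReal ((ψ y - ψ x) ^ 2 / ‖x - y‖ ^ ((N:ℝ) + 2*c)))
      ≤ ENNReal.ofReal ((2:ℝ)^((N:ℝ)+2*c+1) * ((1/lam)^(N:ℝ) * Vb)
          + (1/lam)^((N:ℝ)+2*c) * ((2:ℝ)^((N:ℝ)+2*c+1) * (KJ * (2/lam)^(-(2*c)) * Vb))) * Iψ := by
    have hcB_ne : (ENNReal.ofReal ((2:ℝ)^((N:ℝ)+2*c+1)) *
        (ENNReal.ofReal (KJ * (2/lam)^(-(2*c))) * ENNReal.ofReal Vb)) ≠ ⊤ :=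
      ENNReal.mul_ne_top ENNReal.ofReal_ne_top
        (ENNReal.mul_ne_top ENNReal.ofReal_ne_top ENNReal.ofReal_ne_top)
    calc (∫⁻ x in X, ∫⁻ y in Y \ B2,
          ENNReal.ofReal ((ψ y - ψ x) ^ 2 / ‖x - y‖ ^ ((N:ℝ) + 2*c)))
        ≤ ∫⁻ x in X, (ENNReal.ofReal ((2:ℝ)^((N:ℝ)+2*c+1)) * Iψ
            + ENNReal.ofReal ((ψ x - ψ 0)^2) * (ENNReal.ofReal ((2:ℝ)^((N:ℝ)+2*c+1)) *
                (ENNReal.ofReal (KJ * (2/lam)^(-(2*c))) * ENNReal.ofReal Vb))) :=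
          setLIntegral_mono' hmX hwptw
      _ = (ENNReal.ofReal ((2:ℝ)^((N:ℝ)+2*c+1)) * Iψ) * volume X
          + (∫⁻ x in X, ENNReal.ofReal ((ψ x - ψ 0)^2)) *
            (ENNReal.ofReal ((2:ℝ)^((N:ℝ)+2*c+1)) *
              (ENNReal.ofReal (KJ * (2/lam)^(-(2*c))) * ENNReal.ofReal Vb)) := by
          rw [lintegral_add_left measurable_const, setLIntegral_const,
            lintegral_mul_const' _ _ hcB_ne]
      _ ≤ (ENNReal.ofReal ((2:ℝ)^((N:ℝ)+2*c+1)) * Iψ) *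
            (ENNReal.ofReal ((1/lam)^(N:ℝ)) * ENNReal.ofReal Vb)
          + (ENNReal.ofReal ((1/lam)^((N:ℝ)+2*c)) * Iψ) *
            (ENNReal.ofReal ((2:ℝ)^((N:ℝ)+2*c+1)) *
              (ENNReal.ofReal (KJ * (2/lam)^(-(2*c))) * ENNReal.ofReal Vb)) :=
          add_le_add (mul_le_mul_right hvolX _) (mul_le_mul_left hL2X _)
      _ = ENNReal.ofReal ((2:ℝ)^((N:ℝ)+2*c+1) * ((1/lam)^(N:ℝ) * Vb)
            + (1/lam)^((N:ℝ)+2*c) * ((2:ℝ)^((N:ℝ)+2*c+1) * (KJ * (2/lam)^(-(2*c)) * Vb))) * Iψ := by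
          rw [ENNReal.ofReal_add (by positivity) ?h2, add_mul]
          · congr 1
            · rw [ENNReal.ofReal_mul (by positivity : (0:ℝ) ≤ (2:ℝ)^((N:ℝ)+2*c+1)),
                ENNReal.ofReal_mul (by positivity : (0:ℝ) ≤ (1/lam)^(N:ℝ))]
              ring
            · rw [ENNReal.ofReal_mul (by positivity : (0:ℝ) ≤ (1/lam)^((N:ℝ)+2*c)),
                ENNReal.ofReal_mul (by positivity : (0:ℝ) ≤ (2:ℝ)^((N:ℝ)+2*c+1)),
                ENNReal.ofReal_mul (mul_nonneg hKJ0 (by positivity))]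
              ring
          case h2 => positivity
  -- real coefficient identities
  have hd2 : ((2:ℝ)/lam)^(2*m-2*s) = 2^(2*m-2*s) * lam^(-(2*m-2*s)) := by
    rw [Real.div_rpow (by norm_num) hlam.le, Real.rpow_neg hlam.le, div_eq_mul_inv]
  have hd3 : ((3:ℝ)/lam)^(2*m-2*c) = 3^(2*m-2*c) * lam^(-(2*m-2*c)) := by
    rw [Real.div_rpow (by norm_num) hlam.le, Real.rpow_neg hlam.le, div_eq_mul_inv]
  have Req1 : αs/4 * lam^(2*r-2*s) * (2/lam)^(2*m-2*s) = K1 * lam^(2*r-2*m) := by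
    have hx : lam^(2*r-2*s) * lam^(-(2*m-2*s)) = lam^(2*r-2*m) := by
      rw [← Real.rpow_add hlam]; congr 1; ring
    rw [hd2, hK1def]
    calc αs/4 * lam^(2*r-2*s) * ((2:ℝ)^(2*m-2*s) * lam^(-(2*m-2*s)))
        = αs/4 * (2:ℝ)^(2*m-2*s) * (lam^(2*r-2*s) * lam^(-(2*m-2*s))) := by ring
      _ = αs/4 * (2:ℝ)^(2*m-2*s) * lam^(2*r-2*m) := by rw [hx]
  have Req3 : αc/2 * lam^(2*r-2*c) * (3/lam)^(2*m-2*c) = K3 * lam^(2*r-2*m) := by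
    have hx : lam^(2*r-2*c) * lam^(-(2*m-2*c)) = lam^(2*r-2*m) := by
      rw [← Real.rpow_add hlam]; congr 1; ring
    rw [hd3, hK3def]
    calc αc/2 * lam^(2*r-2*c) * ((3:ℝ)^(2*m-2*c) * lam^(-(2*m-2*c)))
        = αc/2 * (3:ℝ)^(2*m-2*c) * (lam^(2*r-2*c) * lam^(-(2*m-2*c))) := by ring
      _ = αc/2 * (3:ℝ)^(2*m-2*c) * lam^(2*r-2*m) := by rw [hx]
  have Req4 : αc/2 * lam^(2*r-2*c) *
      ((2:ℝ)^((N:ℝ)+2*c+1) * ((1/lam)^(N:ℝ) * Vb)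
        + (1/lam)^((N:ℝ)+2*c) * ((2:ℝ)^((N:ℝ)+2*c+1) * (KJ * (2/lam)^(-(2*c)) * Vb)))
      ≤ K4 * (lam^(-(N:ℝ)) + lam^(2*r-2*c-(N:ℝ))) := by
    have ha : ((1:ℝ)/lam)^(N:ℝ) = lam^(-(N:ℝ)) := by
      rw [one_div, Real.inv_rpow hlam.le, ← Real.rpow_neg hlam.le]
    have hb : ((1:ℝ)/lam)^((N:ℝ)+2*c) = lam^(-((N:ℝ)+2*c)) := by
      rw [one_div, Real.inv_rpow hlam.le, ← Real.rpow_neg hlam.le]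
    have hc2 : ((2:ℝ)/lam)^(-(2*c)) = 2^(-(2*c)) * lam^(2*c) := by
      rw [Real.div_rpow (by norm_num) hlam.le, div_eq_mul_inv, ← Real.rpow_neg hlam.le,
        neg_neg]
    have e1 : lam^(2*r-2*c) * lam^(-(N:ℝ)) = lam^(2*r-2*c-(N:ℝ)) := by
      rw [← Real.rpow_add hlam, ← sub_eq_add_neg]
    have e2 : lam^(2*r-2*c) * (lam^(-((N:ℝ)+2*c)) * lam^(2*c)) = lam^(2*r-2*c-(N:ℝ)) := by
      rw [← Real.rpow_add hlam, ← Real.rpow_add hlam]; congr 1; ring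
    have hlamN : 0 < lam^(-(N:ℝ)) := Real.rpow_pos_of_pos hlam _
    calc αc/2 * lam^(2*r-2*c) *
        ((2:ℝ)^((N:ℝ)+2*c+1) * ((1/lam)^(N:ℝ) * Vb)
          + (1/lam)^((N:ℝ)+2*c) * ((2:ℝ)^((N:ℝ)+2*c+1) * (KJ * (2/lam)^(-(2*c)) * Vb)))
        = αc/2 * ((2:ℝ)^((N:ℝ)+2*c+1) * Vb) * (lam^(2*r-2*c) * lam^(-(N:ℝ)))
          + αc/2 * ((2:ℝ)^((N:ℝ)+2*c+1) * (KJ * 2^(-(2*c)) * Vb)) *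
            (lam^(2*r-2*c) * (lam^(-((N:ℝ)+2*c)) * lam^(2*c))) := by
          rw [ha, hb, hc2]; ring
      _ = K4 * lam^(2*r-2*c-(N:ℝ)) := by rw [e1, e2, hK4def]; ring
      _ ≤ K4 * (lam^(-(N:ℝ)) + lam^(2*r-2*c-(N:ℝ))) := by
          nlinarith [mul_nonneg hK40 hlamN.le]
  -- assemble
  have hT1 : ENNReal.ofReal (αs / 4 * lam ^ (2*r - 2*s)) *
      (∫⁻ x in X, ∫⁻ y in X,
        ENNReal.ofReal ((ψ y - ψ x) ^ 2 / ‖x - y‖ ^ ((N:ℝ) + 2*s)))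
      ≤ ENNReal.ofReal K1 * (ENNReal.ofReal (lam ^ (2*r - 2*m)) * Gm) := by
    have hco : (0:ℝ) ≤ αs/4 * lam ^ (2*r-2*s) := by positivity
    calc ENNReal.ofReal (αs / 4 * lam ^ (2*r - 2*s)) *
        (∫⁻ x in X, ∫⁻ y in X,
          ENNReal.ofReal ((ψ y - ψ x) ^ 2 / ‖x - y‖ ^ ((N:ℝ) + 2*s)))
        ≤ ENNReal.ofReal (αs/4 * lam^(2*r-2*s)) *
            (ENNReal.ofReal ((2/lam)^(2*m-2*s)) * Gm) := mul_le_mul_right H1 _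
      _ = ENNReal.ofReal (αs/4 * lam^(2*r-2*s) * (2/lam)^(2*m-2*s)) * Gm := by
          rw [← mul_assoc, ← ENNReal.ofReal_mul hco]
      _ = ENNReal.ofReal (K1 * lam^(2*r-2*m)) * Gm := by rw [Req1]
      _ = ENNReal.ofReal K1 * (ENNReal.ofReal (lam^(2*r-2*m)) * Gm) := by
          rw [ENNReal.ofReal_mul hK10, mul_assoc]
  have hT2 : ENNReal.ofReal (αr / 4) *
      (∫⁻ x in Y, ∫⁻ y in Y,
        ENNReal.ofReal ((ψ y - ψ x) ^ 2 / ‖x - y‖ ^ ((N:ℝ) + 2*r)))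
      = ENNReal.ofReal K2 * Gr := by
    rw [H2, hK2def]
  have hT3 : ENNReal.ofReal (αc / 2 * lam ^ (2*r - 2*c)) *
      (∫⁻ x in X, ∫⁻ y in Y,
        ENNReal.ofReal ((ψ y - ψ x) ^ 2 / ‖x - y‖ ^ ((N:ℝ) + 2*c)))
      ≤ ENNReal.ofReal K3 * (ENNReal.ofReal (lam ^ (2*r - 2*m)) * Gm)
        + ENNReal.ofReal K4 *
          (ENNReal.ofReal (lam ^ (-(N:ℝ)) + lam ^ (2*r - 2*c - (N:ℝ))) * Iψ) := by
    have hco : (0:ℝ) ≤ αc/2 * lam ^ (2*r-2*c) := by positivity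
    have hW0 : (0:ℝ) ≤ (2:ℝ)^((N:ℝ)+2*c+1) * ((1/lam)^(N:ℝ) * Vb)
        + (1/lam)^((N:ℝ)+2*c) * ((2:ℝ)^((N:ℝ)+2*c+1) * (KJ * (2/lam)^(-(2*c)) * Vb)) := by
      have h1 : (0:ℝ) ≤ (2:ℝ)^((N:ℝ)+2*c+1) * ((1/lam)^(N:ℝ) * Vb) :=
        mul_nonneg (by positivity) (mul_nonneg (by positivity) hVb0)
      have h2 : (0:ℝ) ≤ (1/lam)^((N:ℝ)+2*c) *
          ((2:ℝ)^((N:ℝ)+2*c+1) * (KJ * (2/lam)^(-(2*c)) * Vb)) :=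
        mul_nonneg (by positivity) (mul_nonneg (by positivity)
          (mul_nonneg (mul_nonneg hKJ0 (by positivity)) hVb0))
      linarith
    calc ENNReal.ofReal (αc / 2 * lam ^ (2*r - 2*c)) *
        (∫⁻ x in X, ∫⁻ y in Y,
          ENNReal.ofReal ((ψ y - ψ x) ^ 2 / ‖x - y‖ ^ ((N:ℝ) + 2*c)))
        ≤ ENNReal.ofReal (αc/2 * lam^(2*r-2*c)) *
            ((ENNReal.ofReal ((3/lam)^(2*m-2*c)) * Gm)
              + ENNReal.ofReal ((2:ℝ)^((N:ℝ)+2*c+1) * ((1/lam)^(N:ℝ) * Vb)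
                + (1/lam)^((N:ℝ)+2*c) * ((2:ℝ)^((N:ℝ)+2*c+1) *
                    (KJ * (2/lam)^(-(2*c)) * Vb))) * Iψ) :=
          mul_le_mul_right (Hsplit.trans (add_le_add HNear HFar)) _
      _ = ENNReal.ofReal (αc/2 * lam^(2*r-2*c)) * (ENNReal.ofReal ((3/lam)^(2*m-2*c)) * Gm)
          + ENNReal.ofReal (αc/2 * lam^(2*r-2*c)) *
            (ENNReal.ofReal ((2:ℝ)^((N:ℝ)+2*c+1) * ((1/lam)^(N:ℝ) * Vb)
              + (1/lam)^((N:ℝ)+2*c) * ((2:ℝ)^((N:ℝ)+2*c+1) *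
                  (KJ * (2/lam)^(-(2*c)) * Vb))) * Iψ) := mul_add _ _ _
      _ ≤ ENNReal.ofReal K3 * (ENNReal.ofReal (lam ^ (2*r - 2*m)) * Gm)
          + ENNReal.ofReal K4 *
            (ENNReal.ofReal (lam ^ (-(N:ℝ)) + lam ^ (2*r - 2*c - (N:ℝ))) * Iψ) := by
          refine add_le_add (le_of_eq ?_) ?_
          · calc ENNReal.ofReal (αc/2 * lam^(2*r-2*c)) *
                (ENNReal.ofReal ((3/lam)^(2*m-2*c)) * Gm)
                = ENNReal.ofReal (αc/2 * lam^(2*r-2*c) * (3/lam)^(2*m-2*c)) * Gm := by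
                  rw [← mul_assoc, ← ENNReal.ofReal_mul hco]
              _ = ENNReal.ofReal (K3 * lam^(2*r-2*m)) * Gm := by rw [Req3]
              _ = ENNReal.ofReal K3 * (ENNReal.ofReal (lam^(2*r-2*m)) * Gm) := by
                  rw [ENNReal.ofReal_mul hK30, mul_assoc]
          · calc ENNReal.ofReal (αc/2 * lam^(2*r-2*c)) *
                (ENNReal.ofReal ((2:ℝ)^((N:ℝ)+2*c+1) * ((1/lam)^(N:ℝ) * Vb)
                  + (1/lam)^((N:ℝ)+2*c) * ((2:ℝ)^((N:ℝ)+2*c+1) *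
                      (KJ * (2/lam)^(-(2*c)) * Vb))) * Iψ)
                = ENNReal.ofReal (αc/2 * lam^(2*r-2*c) *
                    ((2:ℝ)^((N:ℝ)+2*c+1) * ((1/lam)^(N:ℝ) * Vb)
                      + (1/lam)^((N:ℝ)+2*c) * ((2:ℝ)^((N:ℝ)+2*c+1) *
                          (KJ * (2/lam)^(-(2*c)) * Vb)))) * Iψ := by
                  rw [← mul_assoc, ← ENNReal.ofReal_mul hco]
              _ ≤ ENNReal.ofReal (K4 * (lam ^ (-(N:ℝ)) + lam ^ (2*r - 2*c - (N:ℝ)))) * Iψ :=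
                  mul_le_mul_left (ENNReal.ofReal_le_ofReal Req4) _
              _ = ENNReal.ofReal K4 *
                  (ENNReal.ofReal (lam ^ (-(N:ℝ)) + lam ^ (2*r - 2*c - (N:ℝ))) * Iψ) := by
                  rw [ENNReal.ofReal_mul hK40, mul_assoc]
  refine le_trans (add_le_add (add_le_add hT1 hT2.le) hT3) ?_
  calc ENNReal.ofReal K1 * (ENNReal.ofReal (lam ^ (2*r - 2*m)) * Gm)
      + ENNReal.ofReal K2 * Gr
      + (ENNReal.ofReal K3 * (ENNReal.ofReal (lam ^ (2*r - 2*m)) * Gm)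
        + ENNReal.ofReal K4 *
          (ENNReal.ofReal (lam ^ (-(N:ℝ)) + lam ^ (2*r - 2*c - (N:ℝ))) * Iψ))
      = (ENNReal.ofReal K1 + ENNReal.ofReal K3) * (ENNReal.ofReal (lam ^ (2*r - 2*m)) * Gm)
        + ENNReal.ofReal K2 * Gr
        + ENNReal.ofReal K4 *
          (ENNReal.ofReal (lam ^ (-(N:ℝ)) + lam ^ (2*r - 2*c - (N:ℝ))) * Iψ) := by ring
    _ ≤ ENNReal.ofReal (K1 + K3 + K2 + K4 + 1) *
          (ENNReal.ofReal (lam ^ (2*r - 2*m)) * Gm)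
        + ENNReal.ofReal (K1 + K3 + K2 + K4 + 1) * Gr
        + ENNReal.ofReal (K1 + K3 + K2 + K4 + 1) *
          (ENNReal.ofReal (lam ^ (-(N:ℝ)) + lam ^ (2*r - 2*c - (N:ℝ))) * Iψ) := by
        refine add_le_add (add_le_add ?_ ?_) ?_
        · rw [← ENNReal.ofReal_add hK10 hK30]
          exact mul_le_mul_left (ENNReal.ofReal_le_ofReal (by linarith)) _
        · exact mul_le_mul_left (ENNReal.ofReal_le_ofReal (by linarith)) _
        · exact mul_le_mul_left (ENNReal.ofReal_le_ofReal (by linarith)) _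
    _ = ENNReal.ofReal (K1 + K3 + K2 + K4 + 1) *
          (ENNReal.ofReal (lam ^ (2*r - 2*m)) * Gm + Gr
            + ENNReal.ofReal (lam ^ (-(N:ℝ)) + lam ^ (2*r - 2*c - (N:ℝ))) * Iψ) := by ring
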